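/- Let G be a graph with n vertices and maximum degree Δ. Then the sum over all unordered pairs {u,v} of distinct vertices of d(u,v)/√(d(u)d(v)) is at most n(Δ−1)/2, where d(u,v) = |N(u) ∩ N(v)|. -/

import Mathlib

open Finset SimpleGraph

lemma sum_offDiag' {V : Type*} [Fintype V] [DecidableEq V] (f : V → V → ℝ) :
    ∑ p ∈ Finset.univ.offDiag, f p.1 p.2 = ∑ u, ∑ v ∈ Finset.univ.erase u, f u v := by
  have hoff : (Finset.univ : Finset V).offDiag = (Finset.univ ×ˢ Finset.univ).filter (fun a : V × V => a.1 ≠ a.2) := by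
    ext a; simp [Finset.mem_offDiag]
  rw [hoff, Finset.sum_filter, Finset.sum_product]
  refine Finset.sum_congr rfl fun u _ => ?_
  rw [← Finset.sum_filter]
  apply Finset.sum_congr _ fun _ _ => rfl
  ext v
  simp [eq_comm, ne_comm]

lemma key {V : Type*} [Fintype V] [DecidableEq V] (G : SimpleGraph V) [DecidableRel G.Adj]
    (u : V) :
    ∑ v ∈ Finset.univ.erase u, ((G.neighborFinset u ∩ G.neighborFinset v).card : ℝ)
      ≤ (G.degree u : ℝ) * ((G.maxDegree : ℝ) - 1) := by
  have h1 : ∀ v : V, ((G.neighborFinset u ∩ G.neighborFinset v).card : ℝ)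
      = ∑ w ∈ G.neighborFinset u, (if v ∈ G.neighborFinset w then (1:ℝ) else 0) := by
    intro v
    have h2 : G.neighborFinset u ∩ G.neighborFinset v
        = (G.neighborFinset u).filter (fun w => v ∈ G.neighborFinset w) := by
      ext w
      simp only [Finset.mem_inter, Finset.mem_filter, SimpleGraph.mem_neighborFinset]
      rw [G.adj_comm w v]
    rw [h2, Finset.card_filter]
    push_cast
    rfl
  calc ∑ v ∈ Finset.univ.erase u, ((G.neighborFinset u ∩ G.neighborFinset v).card : ℝ)
      = ∑ w ∈ G.neighborFinset u, ∑ v ∈ Finset.univ.erase u,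
          (if v ∈ G.neighborFinset w then (1:ℝ) else 0) := by
        rw [← Finset.sum_comm]; exact Finset.sum_congr rfl fun v _ => h1 v
    _ = ∑ w ∈ G.neighborFinset u, (((G.neighborFinset w).erase u).card : ℝ) := by
        refine Finset.sum_congr rfl fun w hw => ?_
        rw [Finset.sum_ite_mem, Finset.sum_const, nsmul_eq_mul, mul_one]
        congr 2
        ext x
        simp [and_comm]
    _ ≤ ∑ w ∈ G.neighborFinset u, ((G.maxDegree : ℝ) - 1) := by
        refine Finset.sum_le_sum fun w hw => ?_
        rw [SimpleGraph.mem_neighborFinset] at hw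
        have hu : u ∈ G.neighborFinset w := by
          rw [SimpleGraph.mem_neighborFinset]; exact hw.symm
        rw [Finset.card_erase_of_mem hu, G.card_neighborFinset_eq_degree]
        have h1 : 1 ≤ G.degree w := (G.card_neighborFinset_eq_degree w) ▸ Finset.card_pos.mpr ⟨u, hu⟩
        have h2 : (G.degree w : ℝ) ≤ G.maxDegree := by
          exact_mod_cast G.degree_le_maxDegree w
        push_cast [h1]
        linarith
    _ = (G.degree u : ℝ) * ((G.maxDegree : ℝ) - 1) := by
        rw [Finset.sum_const, G.card_neighborFinset_eq_degree, nsmul_eq_mul]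

lemma amgm (a b c : ℝ) (ha : 0 < a) (hb : 0 < b) (hc : 0 ≤ c) :
    c / Real.sqrt (a * b) ≤ 1/2 * (c / a + c / b) := by
  rw [Real.sqrt_mul ha.le]
  set sa := Real.sqrt a with hsa
  set sb := Real.sqrt b with hsb
  have hsa0 : 0 < sa := Real.sqrt_pos.mpr ha
  have hsb0 : 0 < sb := Real.sqrt_pos.mpr hb
  have ha2 : sa ^ 2 = a := Real.sq_sqrt ha.le
  have hb2 : sb ^ 2 = b := Real.sq_sqrt hb.le
  rw [← ha2, ← hb2]
  have expand : 1/2*(c/sa^2 + c/sb^2)*(sa*sb) - c = c*(sa-sb)^2/(2*sa*sb) := by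
    field_simp
    ring
  rw [div_le_iff₀ (mul_pos hsa0 hsb0), ← sub_nonneg, expand]
  positivity

/-- The sum over all unordered pairs `{u,v}` of distinct vertices of
`d(u,v)/√(d(u)d(v))` is at most `n(Δ−1)/2`, where `d(u,v) = |N(u) ∩ N(v)|`.
The sum over unordered pairs is written as half the sum over `univ.offDiag`. -/
theorem stmt_5 {V : Type*} [Fintype V] [DecidableEq V]
    (G : SimpleGraph V) [DecidableRel G.Adj]
    (hiso : ∀ v : V, 0 < G.degree v) :
    (1 / 2 : ℝ) * ∑ p ∈ Finset.univ.offDiag,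
      ((G.neighborFinset p.1 ∩ G.neighborFinset p.2).card : ℝ) /
        Real.sqrt ((G.degree p.1 : ℝ) * (G.degree p.2 : ℝ))
    ≤ (Fintype.card V : ℝ) * ((G.maxDegree : ℝ) - 1) / 2 := by
  set c : V → V → ℝ := fun u v => ((G.neighborFinset u ∩ G.neighborFinset v).card : ℝ) with hc
  have hdpos : ∀ v : V, (0:ℝ) < G.degree v := fun v => by exact_mod_cast hiso v
  -- S1 bound
  have hS1 : ∀ (g : V → ℝ), (∀ u, g u = (G.degree u : ℝ)⁻¹) → True := fun _ _ => trivial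
  have S1bound : ∑ u : V, ∑ v ∈ Finset.univ.erase u, c u v / (G.degree u : ℝ)
      ≤ (Fintype.card V : ℝ) * ((G.maxDegree : ℝ) - 1) := by
    calc ∑ u : V, ∑ v ∈ Finset.univ.erase u, c u v / (G.degree u : ℝ)
        = ∑ u : V, (∑ v ∈ Finset.univ.erase u, c u v) / (G.degree u : ℝ) := by
          exact Finset.sum_congr rfl fun u _ => (Finset.sum_div _ _ _).symm
      _ ≤ ∑ u : V, ((G.maxDegree : ℝ) - 1) := by
          refine Finset.sum_le_sum fun u _ => ?_
          rw [div_le_iff₀ (hdpos u)]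
          calc ∑ v ∈ Finset.univ.erase u, c u v
              ≤ (G.degree u : ℝ) * ((G.maxDegree : ℝ) - 1) := key G u
            _ = ((G.maxDegree : ℝ) - 1) * (G.degree u : ℝ) := mul_comm _ _
      _ = (Fintype.card V : ℝ) * ((G.maxDegree : ℝ) - 1) := by
          rw [Finset.sum_const, nsmul_eq_mul, Fintype.card]
  -- swap symmetry
  have hswap : ∑ p ∈ Finset.univ.offDiag, c p.1 p.2 / (G.degree p.2 : ℝ)
      = ∑ p ∈ Finset.univ.offDiag, c p.1 p.2 / (G.degree p.1 : ℝ) := by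
    refine Finset.sum_nbij' (fun p => p.swap) (fun p => p.swap) ?_ ?_ ?_ ?_ ?_ <;>
      simp only [Finset.mem_offDiag, Finset.mem_univ, true_and, Prod.fst_swap,
        Prod.snd_swap, Prod.swap_swap, ne_eq, hc]
    · exact fun p hp => fun h => hp h.symm
    · exact fun p hp => fun h => hp h.symm
    · exact fun _ _ => trivial
    · exact fun _ _ => trivial
    · intro p _
      rw [Finset.inter_comm]
  -- main chain
  have main : ∑ p ∈ Finset.univ.offDiag,
      c p.1 p.2 / Real.sqrt ((G.degree p.1 : ℝ) * (G.degree p.2 : ℝ))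
      ≤ (Fintype.card V : ℝ) * ((G.maxDegree : ℝ) - 1) := by
    calc ∑ p ∈ Finset.univ.offDiag,
        c p.1 p.2 / Real.sqrt ((G.degree p.1 : ℝ) * (G.degree p.2 : ℝ))
        ≤ ∑ p ∈ Finset.univ.offDiag,
            (1/2) * (c p.1 p.2 / (G.degree p.1 : ℝ) + c p.1 p.2 / (G.degree p.2 : ℝ)) := by
          refine Finset.sum_le_sum fun p _ => ?_
          exact amgm _ _ _ (hdpos p.1) (hdpos p.2) (by positivity)
      _ = (1/2) * (∑ p ∈ Finset.univ.offDiag, c p.1 p.2 / (G.degree p.1 : ℝ)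
            + ∑ p ∈ Finset.univ.offDiag, c p.1 p.2 / (G.degree p.2 : ℝ)) := by
          rw [← Finset.mul_sum, Finset.sum_add_distrib]
      _ = ∑ p ∈ Finset.univ.offDiag, c p.1 p.2 / (G.degree p.1 : ℝ) := by
          rw [hswap]; ring
      _ = ∑ u : V, ∑ v ∈ Finset.univ.erase u, c u v / (G.degree u : ℝ) :=
          sum_offDiag' (fun u v => c u v / (G.degree u : ℝ))
      _ ≤ _ := S1bound
  linarith
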